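/- Under the hypotheses of the signature stability theorem (N·L_η ≤ 1, normalized templates, unitary finite group action), the signature distance is bounded by the Hausdorff-type distance between orbits: d(Σ(I), Σ(I')) ≤ min_{g,g'∈G} ‖gI − g'I'‖. -/

import Mathlib

open scoped RealInnerProductSpace

/-- the signature distance is bounded by the Hausdorff-type
distance between orbits: `d(Σ(I), Σ(I')) ≤ min_{g,g'∈G} ‖gI − g'I'‖`. -/
theorem signature_stability_hausdorff
    {G : Type*} [Group G] [Fintype G]
    {X : Type*} [NormedAddCommGroup X] [InnerProductSpace ℝ X]
    [MulAction G X]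
    (hlin : ∀ (g : G) (x y : X), g • (x - y) = g • x - g • y)
    (hunitary : ∀ (g : G) (x y : X), ⟪g • x, g • y⟫ = ⟪x, y⟫)
    (N K : ℕ) (t : Fin K → X) (hnorm : ∀ (g : G) (k : Fin K), ‖g • t k‖ = 1)
    (η : Fin N → ℝ → ℝ) (Ln : Fin N → NNReal) (L : NNReal)
    (hLip : ∀ n, LipschitzWith (Ln n) (η n))
    (hLe : ∀ n, Ln n ≤ L)
    (hNL : (N : ℝ) * L ≤ 1)
    (Sig : Fin K → X → EuclideanSpace ℝ (Fin N))
    (hSig : ∀ (k : Fin K) (I : X) (n : Fin N),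
      Sig k I n = (1 / (Fintype.card G : ℝ)) * ∑ g : G, η n ⟪g • I, t k⟫)
    (I I' : X) :
    (1 / (K : ℝ)) * ∑ k : Fin K, ‖Sig k I - Sig k I'‖ ≤
      Finset.univ.inf' Finset.univ_nonempty
        (fun p : G × G => ‖p.1 • I - p.2 • I'‖) := by
  classical
  -- norms are preserved by the action
  have hns : ∀ (g : G) (v : X), ‖g • v‖ = ‖v‖ := by
    intro g v
    have h1 : ⟪g • v, g • v⟫ = ⟪v, v⟫ := hunitary g v v
    rw [real_inner_self_eq_norm_mul_norm, real_inner_self_eq_norm_mul_norm] at h1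
    nlinarith [norm_nonneg (g • v), norm_nonneg v]
  have htk : ∀ k, ‖t k‖ = 1 := by
    intro k; have := hnorm 1 k; rwa [one_smul] at this
  -- component bound and norm bound for arbitrary J J'
  have key : ∀ (k : Fin K) (J J' : X), ‖Sig k J - Sig k J'‖ ≤ ‖J - J'‖ := by
    intro k J J'
    set c := ‖J - J'‖ with hc
    have hc0 : 0 ≤ c := norm_nonneg _
    have hcomp : ∀ n : Fin N, |Sig k J n - Sig k J' n| ≤ (L : ℝ) * c := by
      intro n
      rw [hSig k J n, hSig k J' n, ← mul_sub, ← Finset.sum_sub_distrib]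
      have hterm : ∀ g : G, |η n ⟪g • J, t k⟫ - η n ⟪g • J', t k⟫| ≤ (L : ℝ) * c := by
        intro g
        have hd := (hLip n).dist_le_mul ⟪g • J, t k⟫ ⟪g • J', t k⟫
        rw [Real.dist_eq, Real.dist_eq] at hd
        have hInner : ⟪g • J, t k⟫ - ⟪g • J', t k⟫ = ⟪g • (J - J'), t k⟫ := by
          rw [hlin g J J', inner_sub_left]
        have hcs : |⟪g • (J - J'), t k⟫| ≤ c := by
          calc |⟪g • (J - J'), t k⟫| ≤ ‖g • (J - J')‖ * ‖t k‖ :=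
                abs_real_inner_le_norm _ _
            _ = c := by rw [hns, htk, mul_one]
        have h1 : (Ln n : ℝ) ≤ (L : ℝ) := by exact_mod_cast hLe n
        have h2 : (0:ℝ) ≤ (Ln n : ℝ) := (Ln n).2
        calc |η n ⟪g • J, t k⟫ - η n ⟪g • J', t k⟫|
            ≤ (Ln n : ℝ) * |⟪g • J, t k⟫ - ⟪g • J', t k⟫| := hd
          _ = (Ln n : ℝ) * |⟪g • (J - J'), t k⟫| := by rw [hInner]
          _ ≤ (L : ℝ) * c := by
              have h3 := abs_nonneg (⟪g • (J - J'), t k⟫ : ℝ)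
              nlinarith
      have hcard : (0:ℝ) < (Fintype.card G : ℝ) := by
        exact_mod_cast Fintype.card_pos
      have hsum : |∑ g : G, (η n ⟪g • J, t k⟫ - η n ⟪g • J', t k⟫)|
          ≤ (Fintype.card G : ℝ) * ((L : ℝ) * c) := by
        calc |∑ g : G, (η n ⟪g • J, t k⟫ - η n ⟪g • J', t k⟫)|
            ≤ ∑ g : G, |η n ⟪g • J, t k⟫ - η n ⟪g • J', t k⟫| :=
              Finset.abs_sum_le_sum_abs _ _
          _ ≤ ∑ _g : G, (L : ℝ) * c := Finset.sum_le_sum fun g _ => hterm g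
          _ = (Fintype.card G : ℝ) * ((L : ℝ) * c) := by
              rw [Finset.sum_const, Finset.card_univ, nsmul_eq_mul]
      rw [abs_mul, abs_of_nonneg (by positivity : (0:ℝ) ≤ 1 / (Fintype.card G : ℝ))]
      calc 1 / (Fintype.card G : ℝ) * |∑ g : G, (η n ⟪g • J, t k⟫ - η n ⟪g • J', t k⟫)|
          ≤ 1 / (Fintype.card G : ℝ) * ((Fintype.card G : ℝ) * ((L : ℝ) * c)) := by
            apply mul_le_mul_of_nonneg_left hsum (by positivity)
        _ = (L : ℝ) * c := by field_simp
    have hL0 : (0:ℝ) ≤ (L : ℝ) := L.2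
    have hnorm_eq : ‖Sig k J - Sig k J'‖ =
        Real.sqrt (∑ n : Fin N, ‖(Sig k J - Sig k J') n‖ ^ 2) :=
      EuclideanSpace.norm_eq _
    rw [hnorm_eq]
    have hsumsq : ∑ n : Fin N, ‖(Sig k J - Sig k J') n‖ ^ 2
        ≤ (N : ℝ) * ((L : ℝ) * c) ^ 2 := by
      calc ∑ n : Fin N, ‖(Sig k J - Sig k J') n‖ ^ 2
          ≤ ∑ _n : Fin N, ((L : ℝ) * c) ^ 2 := by
            apply Finset.sum_le_sum
            intro n _
            have h := hcomp n
            have : ‖(Sig k J - Sig k J') n‖ = |Sig k J n - Sig k J' n| := by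
              simp [PiLp.sub_apply, Real.norm_eq_abs]
            rw [this]
            nlinarith [abs_nonneg (Sig k J n - Sig k J' n)]
        _ = (N : ℝ) * ((L : ℝ) * c) ^ 2 := by
            rw [Finset.sum_const, Finset.card_univ, Fintype.card_fin, nsmul_eq_mul]
    calc Real.sqrt (∑ n : Fin N, ‖(Sig k J - Sig k J') n‖ ^ 2)
        ≤ Real.sqrt ((N : ℝ) ^ 2 * ((L : ℝ) * c) ^ 2) := by
          apply Real.sqrt_le_sqrt
          refine le_trans hsumsq ?_
          have hN : (N : ℝ) ≤ (N : ℝ) ^ 2 := by exact_mod_cast Nat.le_self_pow two_ne_zero N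
          nlinarith [sq_nonneg ((L:ℝ) * c)]
      _ = (N : ℝ) * ((L : ℝ) * c) := by
          rw [← mul_pow, Real.sqrt_sq (by positivity)]
      _ = ((N : ℝ) * (L : ℝ)) * c := by ring
      _ ≤ 1 * c := mul_le_mul_of_nonneg_right hNL hc0
      _ = c := one_mul c
  -- invariance of the signature
  have hinv : ∀ (g : G) (J : X) (k : Fin K), Sig k (g • J) = Sig k J := by
    intro g J k
    ext n
    rw [hSig k (g • J) n, hSig k J n]
    congr 1
    exact Fintype.sum_equiv (Equiv.mulRight g)
      (fun h => η n ⟪h • (g • J), t k⟫)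
      (fun h => η n ⟪h • J, t k⟫)
      (fun h => by simp [mul_smul])
  -- conclude
  apply Finset.le_inf'
  intro p _
  set c := ‖p.1 • I - p.2 • I'‖ with hc
  have hc0 : 0 ≤ c := norm_nonneg _
  have hk : ∀ k : Fin K, ‖Sig k I - Sig k I'‖ ≤ c := by
    intro k
    rw [← hinv p.1 I k, ← hinv p.2 I' k]
    exact key k (p.1 • I) (p.2 • I')
  rcases Nat.eq_zero_or_pos K with hK | hK
  · subst hK
    simp [hc0]
  · have hKpos : (0:ℝ) < (K : ℝ) := by exact_mod_cast hK
    calc (1 / (K : ℝ)) * ∑ k : Fin K, ‖Sig k I - Sig k I'‖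
        ≤ (1 / (K : ℝ)) * ∑ _k : Fin K, c := by
          apply mul_le_mul_of_nonneg_left (Finset.sum_le_sum fun k _ => hk k) (by positivity)
      _ = (1 / (K : ℝ)) * ((K : ℝ) * c) := by
          rw [Finset.sum_const, Finset.card_univ, Fintype.card_fin, nsmul_eq_mul]
      _ = c := by field_simp
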